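/- arXiv:2312.15668 — 3 statements merged into one kernel-verified Lean document; each statement's English description precedes it below -/
import Mathlib

section
/- Let n be a positive integer, let P ∈ ℝ^{n×n} be a diagonal matrix with strictly positive diagonal entries, let Q ∈ ℝ^{n×n} be a symmetric positive definite matrix, and let c ∈ ℝ satisfy c > λ_max(P)/λ_min(Q). Then the 2n×2n symmetric block matrix R = [[cQ, P], [P, P]] is positive definite. -/
open Matrix

lemma rayleigh_bounds {n : ℕ} (A : Matrix (Fin n) (Fin n) ℝ) (hA : A.IsHermitian)
    (x : Fin n → ℝ) :
    (⨅ i, hA.eigenvalues i) * (x ⬝ᵥ x) ≤ x ⬝ᵥ (A *ᵥ x) ∧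
      x ⬝ᵥ (A *ᵥ x) ≤ (⨆ i, hA.eigenvalues i) * (x ⬝ᵥ x) := by
  classical
  set V : Matrix (Fin n) (Fin n) ℝ :=
    (Matrix.IsHermitian.eigenvectorUnitary hA : Matrix (Fin n) (Fin n) ℝ) with hVdef
  set y : Fin n → ℝ := star V *ᵥ x with hy
  have hxV : x ᵥ* V = y := by
    rw [hy, star_eq_conjTranspose, conjTranspose_eq_transpose_of_trivial, mulVec_transpose]
  have hVV : V * star V = 1 :=
    mem_unitaryGroup_iff.mp (Matrix.IsHermitian.eigenvectorUnitary hA).2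
  have h1 : x ⬝ᵥ (A *ᵥ x) = ∑ i, hA.eigenvalues i * y i ^ 2 := by
    conv_lhs => rw [hA.spectral_theorem, Unitary.conjStarAlgAut_apply, ← hVdef, ← mulVec_mulVec, ← mulVec_mulVec,
      dotProduct_mulVec, hxV]
    simp [dotProduct, mulVec_diagonal]
    exact Finset.sum_congr rfl fun i _ => by ring
  have h2 : x ⬝ᵥ x = ∑ i, y i ^ 2 := by
    conv_lhs => rw [show x ⬝ᵥ x = x ⬝ᵥ ((V * star V) *ᵥ x) by rw [hVV, one_mulVec],
      ← mulVec_mulVec, dotProduct_mulVec, hxV]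
    simp [dotProduct]
    exact Finset.sum_congr rfl fun i _ => by ring
  constructor
  · rw [h1, h2, Finset.mul_sum]
    refine Finset.sum_le_sum fun i _ => ?_
    exact mul_le_mul_of_nonneg_right (ciInf_le (Finite.bddBelow_range _) i) (sq_nonneg _)
  · rw [h1, h2, Finset.mul_sum]
    refine Finset.sum_le_sum fun i _ => ?_
    exact mul_le_mul_of_nonneg_right (le_ciSup (Finite.bddAbove_range _) i) (sq_nonneg _)

/-- Appendix A of the paper: the Lyapunov block matrix `R = [[cQ, P], [P, P]]`
is positive definite when `c > λ_max(P) / λ_min(Q)`. -/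
theorem block_lyapunov_posdef
    (n : ℕ) (hn : 0 < n)
    (p : Fin n → ℝ) (hp : ∀ i, 0 < p i)
    (P : Matrix (Fin n) (Fin n) ℝ) (hP : P = Matrix.diagonal p)
    (hPsym : P.IsHermitian)
    (Q : Matrix (Fin n) (Fin n) ℝ) (hQ : Q.PosDef)
    (c : ℝ)
    (hc : c > (⨆ i, hPsym.eigenvalues i) / (⨅ i, hQ.1.eigenvalues i)) :
    (Matrix.fromBlocks (c • Q) P P P).PosDef := by
  classical
  haveI : Nonempty (Fin n) := Fin.pos_iff_nonempty.mp hn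
  have hPpd : P.PosDef := by rw [hP]; exact Matrix.posDef_diagonal_iff.mpr hp
  set lP : ℝ := ⨆ i, hPsym.eigenvalues i with hlP
  set lQ : ℝ := ⨅ i, hQ.1.eigenvalues i with hlQ
  have hlQpos : 0 < lQ := by
    obtain ⟨j, hj⟩ := exists_eq_ciInf_of_finite (f := fun i => hQ.1.eigenvalues i)
    rw [hlQ, ← hj]; exact hQ.eigenvalues_pos j
  have hlPpos : 0 < lP := by
    obtain ⟨j, hj⟩ := exists_eq_ciSup_of_finite (f := fun i => hPsym.eigenvalues i)
    rw [hlP, ← hj]; exact hPpd.eigenvalues_pos j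
  have hc' : lP < c * lQ := (div_lt_iff₀ hlQpos).mp hc
  have hcpos : 0 < c := by
    have : (0:ℝ) < lP / lQ := div_pos hlPpos hlQpos
    linarith
  rw [Matrix.posDef_iff_dotProduct_mulVec]
  constructor
  · rw [Matrix.isHermitian_fromBlocks_iff]
    have hcQ : (c • Q).IsHermitian := by
      show (c • Q)ᴴ = c • Q
      rw [conjTranspose_smul, star_trivial, hQ.1.eq]
    exact ⟨hcQ, hPsym, hPsym, hPsym⟩
  · intro x hx
    set u : Fin n → ℝ := x ∘ Sum.inl with hu
    set v : Fin n → ℝ := x ∘ Sum.inr with hv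
    have hxelim : x = Sum.elim u v := by funext i; cases i <;> rfl
    have hform : star x ⬝ᵥ (Matrix.fromBlocks (c • Q) P P P *ᵥ x)
        = c * (u ⬝ᵥ (Q *ᵥ u)) + (u ⬝ᵥ (P *ᵥ v) + (v ⬝ᵥ (P *ᵥ u) + v ⬝ᵥ (P *ᵥ v))) := by
      rw [star_trivial, hxelim, fromBlocks_mulVec, sumElim_dotProduct_sumElim,
        dotProduct_add, dotProduct_add, smul_mulVec, dotProduct_smul]
      ring_nf
      simp only [Sum.elim_comp_inl, Sum.elim_comp_inr]
      ring
    have hPdiag : ∀ w : Fin n → ℝ, P *ᵥ w = fun i => p i * w i := by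
      intro w; funext i; rw [hP]; exact mulVec_diagonal _ _ _
    have hPform : ∀ w z : Fin n → ℝ, w ⬝ᵥ (P *ᵥ z) = ∑ i, p i * w i * z i := by
      intro w z; rw [hPdiag]; exact Finset.sum_congr rfl fun i _ => by dsimp [dotProduct]; ring
    have hkey : star x ⬝ᵥ (Matrix.fromBlocks (c • Q) P P P *ᵥ x)
        = (c * (u ⬝ᵥ (Q *ᵥ u)) - ∑ i, p i * u i ^ 2) + ∑ i, p i * (u i + v i) ^ 2 := by
      rw [hform, hPform, hPform, hPform, ← Finset.sum_add_distrib, ← Finset.sum_add_distrib]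
      have hs : ∑ i, (p i * u i * v i + (p i * v i * u i + p i * v i * v i))
          = (∑ i, p i * (u i + v i) ^ 2) - ∑ i, p i * u i ^ 2 := by
        rw [← Finset.sum_sub_distrib]
        exact Finset.sum_congr rfl fun i _ => by ring
      rw [hs]; ring
    have hsum2 : 0 ≤ ∑ i, p i * (u i + v i) ^ 2 :=
      Finset.sum_nonneg fun i _ => mul_nonneg (hp i).le (sq_nonneg _)
    by_cases hu0 : u = 0
    · have hv0 : v ≠ 0 := by
        intro h
        apply hx
        rw [hxelim, hu0, h]
        funext i; cases i <;> rfl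
      obtain ⟨j, hj⟩ := Function.ne_iff.mp hv0
      rw [hkey, hu0]
      simp only [Pi.zero_apply, zero_add, mulVec_zero, dotProduct_zero, mul_zero, ne_eq,
        zero_pow, sub_zero, zero_sub]
      have : (0:ℝ) < ∑ i, p i * v i ^ 2 :=
        Finset.sum_pos' (fun i _ => mul_nonneg (hp i).le (sq_nonneg _))
          ⟨j, Finset.mem_univ j, mul_pos (hp j) (sq_pos_of_ne_zero hj)⟩
      simpa using this
    · have huu : 0 < u ⬝ᵥ u := by
        obtain ⟨j, hj⟩ := Function.ne_iff.mp hu0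
        exact Finset.sum_pos' (fun i _ => mul_self_nonneg (u i))
          ⟨j, Finset.mem_univ j, mul_self_pos.mpr hj⟩
      have h1 : ∑ i, p i * u i ^ 2 ≤ lP * (u ⬝ᵥ u) := by
        have h := (rayleigh_bounds P hPsym u).2
        have he : u ⬝ᵥ (P *ᵥ u) = ∑ i, p i * u i ^ 2 := by
          rw [hPform]; exact Finset.sum_congr rfl fun i _ => by ring
        rw [he] at h
        exact h
      have h2 : lQ * (u ⬝ᵥ u) ≤ u ⬝ᵥ (Q *ᵥ u) := (rayleigh_bounds Q hQ.1 u).1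
      have h3 : c * (lQ * (u ⬝ᵥ u)) ≤ c * (u ⬝ᵥ (Q *ᵥ u)) :=
        mul_le_mul_of_nonneg_left h2 hcpos.le
      have h4 : 0 < (c * lQ - lP) * (u ⬝ᵥ u) := mul_pos (by linarith) huu
      rw [hkey]
      nlinarith [h1, h3, h4, hsum2]
end

section
/- Let ν, θ, ν', θ' > 0 be real numbers, and let S and I be independent real random variables such that S has probability density function f_S(x) = x^{(ν−2)/2} / (2 θ^ν Γ(ν)) · exp(−√x/θ) for x > 0 (and 0 otherwise) and I has probability density function f_I(x) = x^{ν'−1} / (θ'^{ν'} Γ(ν')) · exp(−x/θ') for x > 0 (and 0 otherwise). Then the ratio Z := S/I has probability density function f_Z(z) = z^{(ν−2)/2} / (2 θ^ν θ'^{ν'} Γ(ν) Γ(ν')) · ∫_0^∞ x^{(ν + 2ν' − 2)/2} exp(−√(xz)/θ − x/θ') dx for z > 0, where Γ denotes the Gamma function. -/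
open MeasureTheory Real Set
open scoped ENNReal

lemma sir_meas_h {z θ θ' p : ℝ} :
    Measurable (fun x : ℝ => x ^ p * Real.exp (-Real.sqrt (x * z) / θ - x / θ')) :=
  (measurable_id'.pow_const p).mul
    ((((measurable_id'.mul_const z).sqrt.neg.div_const θ).sub
      (measurable_id'.div_const θ')).exp)

lemma sir_integrable {z θ θ' p : ℝ} (hz : 0 < z) (hθ : 0 < θ) (hθ' : 0 < θ') (hp : -1 < p) :
    IntegrableOn (fun x : ℝ => x ^ p * Real.exp (-Real.sqrt (x * z) / θ - x / θ')) (Set.Ioi 0) := by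
  have hb : (0:ℝ) < 1/θ' := by positivity
  refine (integrableOn_rpow_mul_exp_neg_mul_rpow hp zero_lt_one hb).mono'
    sir_meas_h.aestronglyMeasurable ?_
  refine (ae_restrict_iff' measurableSet_Ioi).2 (Filter.Eventually.of_forall fun x hx => ?_)
  have hx0 : (0:ℝ) < x := hx
  rw [Real.norm_eq_abs, abs_of_nonneg (by positivity), Real.rpow_one]
  refine mul_le_mul_of_nonneg_left (Real.exp_le_exp.2 ?_) (Real.rpow_nonneg hx0.le p)
  have h1 : 0 ≤ Real.sqrt (x * z) / θ := by positivity
  have h2 : -(1/θ') * x = -x/θ' := by ring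
  rw [h2, neg_div, neg_div θ' x]
  have h3 : -(Real.sqrt (x * z) / θ) ≤ 0 := neg_nonpos.2 h1
  linarith

lemma lintegral_scale (G : ℝ → ℝ≥0∞) (hG : Measurable G) {x : ℝ} (hx : 0 < x) :
    ∫⁻ s, G s = ENNReal.ofReal x * ∫⁻ z, G (x * z) := by
  have h1 : ∫⁻ z, G (x * z) = ∫⁻ s, G s ∂(Measure.map (x * ·) volume) :=
    (lintegral_map hG (measurable_const_mul x)).symm
  rw [h1, Real.map_volume_mul_left (ne_of_gt hx), lintegral_smul_measure, smul_eq_mul, ← mul_assoc,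
    ← ENNReal.ofReal_mul hx.le, abs_of_pos (inv_pos.mpr hx), mul_inv_cancel₀ (ne_of_gt hx),
    ENNReal.ofReal_one, one_mul]

/-- Eq. (44) of the paper: PDF of the SIR `Z = S/I`, where the desired signal
power `S` is the square of a Gamma(ν, θ) variable and the interference `I` is
Gamma(ν', θ'), independent of `S`. -/
theorem sir_pdf
    {α : Type*} [MeasurableSpace α] (μ : Measure α) [IsProbabilityMeasure μ]
    (ν θ ν' θ' : ℝ) (hν : 0 < ν) (hθ : 0 < θ) (hν' : 0 < ν') (hθ' : 0 < θ')
    (S I : α → ℝ) (hS : Measurable S) (hI : Measurable I)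
    (hSlaw : Measure.map S μ = volume.withDensity (fun x => ENNReal.ofReal
      (if 0 < x then
        x ^ ((ν - 2) / 2) / (2 * θ ^ ν * Real.Gamma ν) * Real.exp (-Real.sqrt x / θ)
      else 0)))
    (hIlaw : Measure.map I μ = volume.withDensity (fun x => ENNReal.ofReal
      (if 0 < x then
        x ^ (ν' - 1) / (θ' ^ ν' * Real.Gamma ν') * Real.exp (-x / θ')
      else 0)))
    (hindep : ProbabilityTheory.IndepFun S I μ) :
    Measure.map (fun ω => S ω / I ω) μ = volume.withDensity (fun z => ENNReal.ofReal
      (if 0 < z then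
        z ^ ((ν - 2) / 2) / (2 * θ ^ ν * θ' ^ ν' * Real.Gamma ν * Real.Gamma ν') *
          ∫ x in Set.Ioi (0 : ℝ),
            x ^ ((ν + 2 * ν' - 2) / 2) * Real.exp (-Real.sqrt (x * z) / θ - x / θ')
      else 0)) := by
  have hΓ : 0 < Real.Gamma ν := Real.Gamma_pos_of_pos hν
  have hΓ' : 0 < Real.Gamma ν' := Real.Gamma_pos_of_pos hν'
  set FS : ℝ → ℝ≥0∞ := fun x => ENNReal.ofReal
      (if 0 < x then
        x ^ ((ν - 2) / 2) / (2 * θ ^ ν * Real.Gamma ν) * Real.exp (-Real.sqrt x / θ)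
      else 0) with hFSdef
  set FI : ℝ → ℝ≥0∞ := fun x => ENNReal.ofReal
      (if 0 < x then
        x ^ (ν' - 1) / (θ' ^ ν' * Real.Gamma ν') * Real.exp (-x / θ')
      else 0) with hFIdef
  set FZ : ℝ → ℝ≥0∞ := fun z => ENNReal.ofReal
      (if 0 < z then
        z ^ ((ν - 2) / 2) / (2 * θ ^ ν * θ' ^ ν' * Real.Gamma ν * Real.Gamma ν') *
          ∫ x in Set.Ioi (0 : ℝ),
            x ^ ((ν + 2 * ν' - 2) / 2) * Real.exp (-Real.sqrt (x * z) / θ - x / θ')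
      else 0) with hFZdef
  have hFS : Measurable FS := ENNReal.measurable_ofReal.comp
    (Measurable.ite measurableSet_Ioi
      (((measurable_id'.pow_const _).div_const _).mul
        (measurable_id'.sqrt.neg.div_const θ).exp) measurable_const)
  have hFI : Measurable FI := ENNReal.measurable_ofReal.comp
    (Measurable.ite measurableSet_Ioi
      (((measurable_id'.pow_const _).div_const _).mul
        (measurable_id'.neg.div_const θ').exp) measurable_const)
  have hq : Measurable fun p : ℝ × ℝ => p.1 / p.2 := measurable_fst.div measurable_snd
  have hpair := (ProbabilityTheory.indepFun_iff_map_prod_eq_prod_map_map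
    hS.aemeasurable hI.aemeasurable).mp hindep
  have hmap : Measure.map (fun ω => S ω / I ω) μ
      = Measure.map (fun p : ℝ × ℝ => p.1 / p.2)
          ((volume.withDensity FS).prod (volume.withDensity FI)) := by
    rw [← hSlaw, ← hIlaw, ← hpair, Measure.map_map hq (hS.prodMk hI)]
    rfl
  rw [hmap]
  ext A hA
  have hJm : Measurable (A.indicator (1 : ℝ → ℝ≥0∞)) := measurable_one.indicator hA
  set J : ℝ → ℝ≥0∞ := A.indicator 1 with hJdef
  have hslice : ∀ x : ℝ,
      MeasurableSet ((fun s => (s, x)) ⁻¹' ((fun p : ℝ × ℝ => p.1 / p.2) ⁻¹' A)) :=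
    fun x => measurable_prodMk_right (hq hA)
  -- key pointwise identity for x > 0
  have key : ∀ x : ℝ, 0 < x →
      FI x * (volume.withDensity FS)
        ((fun s => (s, x)) ⁻¹' ((fun p : ℝ × ℝ => p.1 / p.2) ⁻¹' A))
      = ∫⁻ z, FI x * ENNReal.ofReal x * (J z * FS (x * z)) := by
    intro x hx
    have hGm : Measurable fun s => J (s / x) * FS s :=
      (hJm.comp (measurable_id'.div_const x)).mul hFS
    have h1 : (volume.withDensity FS)
        ((fun s => (s, x)) ⁻¹' ((fun p : ℝ × ℝ => p.1 / p.2) ⁻¹' A))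
        = ∫⁻ s, J (s / x) * FS s := by
      rw [withDensity_apply _ (hslice x), ← lintegral_indicator (hslice x)]
      refine lintegral_congr fun s => ?_
      by_cases hs : s / x ∈ A
      · rw [Set.indicator_of_mem (show s ∈
            ((fun s => (s, x)) ⁻¹' ((fun p : ℝ × ℝ => p.1 / p.2) ⁻¹' A)) from hs), hJdef,
          Set.indicator_of_mem hs, Pi.one_apply, one_mul]
      · rw [Set.indicator_of_notMem (show s ∉
            ((fun s => (s, x)) ⁻¹' ((fun p : ℝ × ℝ => p.1 / p.2) ⁻¹' A)) from hs), hJdef,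
          Set.indicator_of_notMem hs, zero_mul]
    rw [h1, lintegral_scale _ hGm hx]
    have h2 : ∀ z : ℝ, x * z / x = z := fun z => mul_div_cancel_left₀ z (ne_of_gt hx)
    simp only [h2]
    have hgz : Measurable fun z : ℝ => J z * FS (x * z) :=
      hJm.mul (hFS.comp (measurable_const_mul x))
    rw [← mul_assoc, ← lintegral_const_mul _ hgz]
  -- key per-z identity
  have zkey : ∀ z : ℝ,
      (∫⁻ x in Ioi (0:ℝ), FI x * ENNReal.ofReal x * FS (x * z)) = FZ z := by
    intro z
    by_cases hz : 0 < z
    · have hp : -1 < (ν + 2 * ν' - 2) / 2 := by linarith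
      have hCz : (0:ℝ) ≤ z ^ ((ν - 2) / 2) /
          (2 * θ ^ ν * θ' ^ ν' * Real.Gamma ν * Real.Gamma ν') := by
        apply div_nonneg (Real.rpow_nonneg hz.le _)
        have := Real.rpow_pos_of_pos hθ ν
        have := Real.rpow_pos_of_pos hθ' ν'
        positivity
      calc (∫⁻ x in Ioi (0:ℝ), FI x * ENNReal.ofReal x * FS (x * z))
          = ∫⁻ x in Ioi (0:ℝ), ENNReal.ofReal
              (z ^ ((ν - 2) / 2) / (2 * θ ^ ν * θ' ^ ν' * Real.Gamma ν * Real.Gamma ν') *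
                (x ^ ((ν + 2 * ν' - 2) / 2) *
                  Real.exp (-Real.sqrt (x * z) / θ - x / θ'))) := by
            refine setLIntegral_congr_fun_ae measurableSet_Ioi (ae_of_all _ fun x hx => ?_)
            have hx0 : (0:ℝ) < x := hx
            have hxz : 0 < x * z := mul_pos hx0 hz
            have hfI0 : 0 ≤ x ^ (ν' - 1) / (θ' ^ ν' * Real.Gamma ν') * Real.exp (-x / θ') := by
              have := Real.rpow_pos_of_pos hθ' ν'
              have := Real.rpow_nonneg hx0.le (ν' - 1)
              positivity
            rw [hFIdef, hFSdef]
            simp only [if_pos hx0, if_pos hxz]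
            rw [← ENNReal.ofReal_mul hfI0, ← ENNReal.ofReal_mul (by positivity)]
            congr 1
            rw [Real.mul_rpow hx0.le hz.le,
              show (ν + 2 * ν' - 2) / 2 = (ν' - 1) + 1 + (ν - 2) / 2 by ring,
              Real.rpow_add hx0, Real.rpow_add hx0, Real.rpow_one,
              show -Real.sqrt (x * z) / θ - x / θ' = -x / θ' + -Real.sqrt (x * z) / θ by ring,
              Real.exp_add]
            ring
        _ = ENNReal.ofReal (∫ x in Ioi (0:ℝ),
              z ^ ((ν - 2) / 2) / (2 * θ ^ ν * θ' ^ ν' * Real.Gamma ν * Real.Gamma ν') *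
                (x ^ ((ν + 2 * ν' - 2) / 2) *
                  Real.exp (-Real.sqrt (x * z) / θ - x / θ'))) := by
            refine (MeasureTheory.ofReal_integral_eq_lintegral_ofReal
              ((sir_integrable hz hθ hθ' hp).const_mul _) ?_).symm
            refine (ae_restrict_iff' measurableSet_Ioi).2 (ae_of_all _ fun x hx => ?_)
            have hx0 : (0:ℝ) < x := hx
            exact mul_nonneg hCz
              (mul_nonneg (Real.rpow_nonneg hx0.le _) (Real.exp_nonneg _))
        _ = FZ z := by
            rw [hFZdef]
            simp only [if_pos hz]
            rw [MeasureTheory.integral_const_mul]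
    · have hzero : ∀ᵐ x ∂volume, x ∈ Ioi (0:ℝ) →
          FI x * ENNReal.ofReal x * FS (x * z) = (0 : ℝ≥0∞) := by
        refine ae_of_all _ fun x hx => ?_
        have hx0 : (0:ℝ) < x := hx
        have hxz : ¬ 0 < x * z := by
          push_neg at hz ⊢
          exact mul_nonpos_of_nonneg_of_nonpos hx0.le hz
        rw [hFSdef]
        simp only [if_neg hxz, ENNReal.ofReal_zero, mul_zero]
      rw [setLIntegral_congr_fun_ae measurableSet_Ioi hzero, lintegral_zero, hFZdef]
      simp [hz]
  -- main computation
  rw [Measure.map_apply hq hA, withDensity_apply _ hA,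
    Measure.prod_apply_symm (hq hA),
    lintegral_withDensity_eq_lintegral_mul volume hFI
      (measurable_measure_prodMk_right (hq hA))]
  simp only [Pi.mul_apply]
  have hunc : Measurable fun p : ℝ × ℝ =>
      FI p.1 * ENNReal.ofReal p.1 * (J p.2 * FS (p.1 * p.2)) :=
    ((hFI.comp measurable_fst).mul (ENNReal.measurable_ofReal.comp measurable_fst)).mul
      ((hJm.comp measurable_snd).mul (hFS.comp (measurable_fst.mul measurable_snd)))
  calc ∫⁻ x, FI x * (volume.withDensity FS)
          ((fun s => (s, x)) ⁻¹' ((fun p : ℝ × ℝ => p.1 / p.2) ⁻¹' A))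
      = ∫⁻ x, (Ioi (0:ℝ)).indicator (fun x => FI x * (volume.withDensity FS)
          ((fun s => (s, x)) ⁻¹' ((fun p : ℝ × ℝ => p.1 / p.2) ⁻¹' A))) x := by
        refine lintegral_congr fun x => ?_
        by_cases hx : (0:ℝ) < x
        · rw [Set.indicator_of_mem (show x ∈ Ioi (0:ℝ) from hx)]
        · rw [Set.indicator_of_notMem (show x ∉ Ioi (0:ℝ) from hx), hFIdef]
          simp only [if_neg hx, ENNReal.ofReal_zero, zero_mul]
    _ = ∫⁻ x in Ioi (0:ℝ), FI x * (volume.withDensity FS)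
          ((fun s => (s, x)) ⁻¹' ((fun p : ℝ × ℝ => p.1 / p.2) ⁻¹' A)) :=
        lintegral_indicator measurableSet_Ioi _
    _ = ∫⁻ x in Ioi (0:ℝ), ∫⁻ z, FI x * ENNReal.ofReal x * (J z * FS (x * z)) :=
        setLIntegral_congr_fun_ae measurableSet_Ioi (ae_of_all _ fun x hx => key x hx)
    _ = ∫⁻ z, ∫⁻ x in Ioi (0:ℝ), FI x * ENNReal.ofReal x * (J z * FS (x * z)) :=
        lintegral_lintegral_swap hunc.aemeasurable
    _ = ∫⁻ z, J z * ∫⁻ x in Ioi (0:ℝ), FI x * ENNReal.ofReal x * FS (x * z) := by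
        refine lintegral_congr fun z => ?_
        have hgx : Measurable fun x : ℝ => FI x * ENNReal.ofReal x * FS (x * z) :=
          (hFI.mul ENNReal.measurable_ofReal).mul (hFS.comp (measurable_id'.mul_const z))
        rw [← lintegral_const_mul _ hgx]
        exact lintegral_congr fun x => by ring
    _ = ∫⁻ z, A.indicator
          (fun z => ∫⁻ x in Ioi (0:ℝ), FI x * ENNReal.ofReal x * FS (x * z)) z := by
        refine lintegral_congr fun z => ?_
        by_cases hzA : z ∈ A
        · rw [Set.indicator_of_mem hzA, hJdef, Set.indicator_of_mem hzA, Pi.one_apply, one_mul]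
        · rw [Set.indicator_of_notMem hzA, hJdef, Set.indicator_of_notMem hzA, zero_mul]
    _ = ∫⁻ z in A, ∫⁻ x in Ioi (0:ℝ), FI x * ENNReal.ofReal x * FS (x * z) :=
        lintegral_indicator hA _
    _ = ∫⁻ z in A, FZ z :=
        setLIntegral_congr_fun_ae hA (ae_of_all _ fun z _ => zkey z)
end

section
/- Let ν, θ, ν', θ' > 0 be real numbers, and let S and I be independent real random variables such that S has probability density function f_S(x) = x^{(ν−2)/2} / (2 θ^ν Γ(ν)) · exp(−√x/θ) for x > 0 (and 0 otherwise) and I has probability density function f_I(x) = x^{ν'−1} / (θ'^{ν'} Γ(ν')) · exp(−x/θ') for x > 0 (and 0 otherwise). Then the ergodic rate satisfies E[ln(1 + S/I)] = 1 / (2 θ^ν θ'^{ν'} Γ(ν) Γ(ν')) · ∫_0^∞ z^{(ν−2)/2} ln(1 + z) · [∫_0^∞ x^{(ν + 2ν' − 2)/2} exp(−√(xz)/θ − x/θ') dx] dz, where Γ denotes the Gamma function. -/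
open MeasureTheory Set ENNReal

section ErgodicRateAux

lemma erg_lint_Ioi (f : ℝ → ℝ≥0∞) (h : ∀ x ≤ (0:ℝ), f x = 0) :
    ∫⁻ x, f x = ∫⁻ x in Ioi (0:ℝ), f x := by
  rw [← lintegral_indicator measurableSet_Ioi]
  refine lintegral_congr fun x => ?_
  by_cases hx : x ∈ Ioi (0:ℝ)
  · rw [Set.indicator_of_mem hx]
  · rw [Set.indicator_of_notMem hx, h x (le_of_not_gt hx)]

lemma erg_subst_mul (i : ℝ) (hi : 0 < i) (f : ℝ → ℝ≥0∞) (hf : Measurable f) :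
    ∫⁻ s in Ioi (0:ℝ), f s = ENNReal.ofReal i * ∫⁻ z in Ioi (0:ℝ), f (i * z) := by
  have hpre : (fun z => i * z) ⁻¹' (Ioi (0:ℝ)) = Ioi 0 := by
    rw [preimage_const_mul_Ioi₀ _ hi, zero_div]
  have hmap : Measure.map (fun z => i * z) (volume.restrict (Ioi (0:ℝ)))
      = ENNReal.ofReal i⁻¹ • volume.restrict (Ioi (0:ℝ)) := by
    rw [← hpre, ← Measure.restrict_map (measurable_const_mul i) measurableSet_Ioi,
      Real.map_volume_mul_left hi.ne', hpre, Measure.restrict_smul,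
      abs_of_pos (inv_pos.mpr hi)]
  have h2 := lintegral_map hf (measurable_const_mul i) (μ := volume.restrict (Ioi (0:ℝ)))
  rw [hmap, lintegral_smul_measure, smul_eq_mul] at h2
  rw [← h2, ← mul_assoc, ← ENNReal.ofReal_mul hi.le, mul_inv_cancel₀ hi.ne',
    ENNReal.ofReal_one, one_mul]

lemma erg_ae_pos_of_law {α : Type*} [MeasurableSpace α] (μ : Measure α) (S : α → ℝ)
    (hS : Measurable S) (d : ℝ → ℝ) (hd : ∀ x ≤ (0:ℝ), d x = 0)
    (hlaw : Measure.map S μ = volume.withDensity (fun x => ENNReal.ofReal (d x))) :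
    ∀ᵐ ω ∂μ, 0 < S ω := by
  rw [ae_iff]
  have h1 : {ω | ¬ 0 < S ω} = S ⁻¹' (Iic 0) := by ext ω; simp [not_lt]
  rw [h1, ← Measure.map_apply hS measurableSet_Iic, hlaw,
    withDensity_apply _ measurableSet_Iic,
    setLIntegral_congr_fun measurableSet_Iic
      (fun x hx => by rw [hd x hx, ENNReal.ofReal_zero])]
  simp

lemma erg_key_ident (ν θ ν' θ' : ℝ) (hν : 0 < ν) (hθ : 0 < θ) (hν' : 0 < ν') (hθ' : 0 < θ')
    (x z : ℝ) (hx : 0 < x) (hz : 0 < z) :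
    x * ((x ^ (ν' - 1) / (θ' ^ ν' * Real.Gamma ν') * Real.exp (-x / θ')) *
      ((x * z) ^ ((ν - 2) / 2) / (2 * θ ^ ν * Real.Gamma ν) * Real.exp (-Real.sqrt (x * z) / θ) *
        Real.log (1 + z)))
    = 1 / (2 * θ ^ ν * θ' ^ ν' * Real.Gamma ν * Real.Gamma ν') *
      (z ^ ((ν - 2) / 2) * Real.log (1 + z) *
        (x ^ ((ν + 2 * ν' - 2) / 2) * Real.exp (-Real.sqrt (x * z) / θ - x / θ'))) := by
  have hG : (0:ℝ) < Real.Gamma ν := Real.Gamma_pos_of_pos hν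
  have hG' : (0:ℝ) < Real.Gamma ν' := Real.Gamma_pos_of_pos hν'
  have hθν : (0:ℝ) < θ ^ ν := Real.rpow_pos_of_pos hθ ν
  have hθν' : (0:ℝ) < θ' ^ ν' := Real.rpow_pos_of_pos hθ' ν'
  have e1 : Real.exp (-Real.sqrt (x * z) / θ - x / θ')
      = Real.exp (-Real.sqrt (x * z) / θ) * Real.exp (-x / θ') := by
    rw [← Real.exp_add]; ring_nf
  have e2 : (x * z) ^ ((ν - 2) / 2) = x ^ ((ν - 2) / 2) * z ^ ((ν - 2) / 2) :=
    Real.mul_rpow hx.le hz.le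
  have e3 : x * x ^ (ν' - 1) * x ^ ((ν - 2) / 2) = x ^ ((ν + 2 * ν' - 2) / 2) := by
    nth_rewrite 1 [← Real.rpow_one x]
    rw [← Real.rpow_add hx, ← Real.rpow_add hx]
    congr 1; ring
  rw [e1, e2, ← e3]
  field_simp

end ErgodicRateAux

/-- Eq. (41) of the paper (Theorem 3): the ergodic rate `E[ln(1 + SIR)]` of a
typical UE. -/
theorem ergodic_rate
    {α : Type*} [MeasurableSpace α] (μ : Measure α) [IsProbabilityMeasure μ]
    (ν θ ν' θ' : ℝ) (hν : 0 < ν) (hθ : 0 < θ) (hν' : 0 < ν') (hθ' : 0 < θ')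
    (S I : α → ℝ) (hS : Measurable S) (hI : Measurable I)
    (hSlaw : Measure.map S μ = volume.withDensity (fun x => ENNReal.ofReal
      (if 0 < x then
        x ^ ((ν - 2) / 2) / (2 * θ ^ ν * Real.Gamma ν) * Real.exp (-Real.sqrt x / θ)
      else 0)))
    (hIlaw : Measure.map I μ = volume.withDensity (fun x => ENNReal.ofReal
      (if 0 < x then
        x ^ (ν' - 1) / (θ' ^ ν' * Real.Gamma ν') * Real.exp (-x / θ')
      else 0)))
    (hindep : ProbabilityTheory.IndepFun S I μ) :
    ∫ ω, Real.log (1 + S ω / I ω) ∂μ =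
      1 / (2 * θ ^ ν * θ' ^ ν' * Real.Gamma ν * Real.Gamma ν') *
        ∫ z in Set.Ioi (0 : ℝ),
          z ^ ((ν - 2) / 2) * Real.log (1 + z) *
            ∫ x in Set.Ioi (0 : ℝ),
              x ^ ((ν + 2 * ν' - 2) / 2) * Real.exp (-Real.sqrt (x * z) / θ - x / θ') := by
  set c : ℝ := 1 / (2 * θ ^ ν * θ' ^ ν' * Real.Gamma ν * Real.Gamma ν') with hc
  have hG : (0:ℝ) < Real.Gamma ν := Real.Gamma_pos_of_pos hν
  have hG' : (0:ℝ) < Real.Gamma ν' := Real.Gamma_pos_of_pos hν'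
  have hθν : (0:ℝ) < θ ^ ν := Real.rpow_pos_of_pos hθ ν
  have hθν' : (0:ℝ) < θ' ^ ν' := Real.rpow_pos_of_pos hθ' ν'
  have hcpos : 0 < c := by positivity
  set dS : ℝ → ℝ := fun x => if 0 < x then
      x ^ ((ν - 2) / 2) / (2 * θ ^ ν * Real.Gamma ν) * Real.exp (-Real.sqrt x / θ) else 0
    with hdS
  set dI : ℝ → ℝ := fun x => if 0 < x then
      x ^ (ν' - 1) / (θ' ^ ν' * Real.Gamma ν') * Real.exp (-x / θ') else 0 with hdI
  have hmdS : Measurable dS := by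
    refine Measurable.ite measurableSet_Ioi ?_ measurable_const; fun_prop
  have hmdI : Measurable dI := by
    refine Measurable.ite measurableSet_Ioi ?_ measurable_const; fun_prop
  set F : ℝ → ℝ → ℝ := fun z x =>
      x ^ ((ν + 2 * ν' - 2) / 2) * Real.exp (-Real.sqrt (x * z) / θ - x / θ') with hF
  set L : ℝ → ℝ≥0∞ := fun z => ∫⁻ x in Ioi (0:ℝ), ENNReal.ofReal (F z x) with hL
  have hmL : Measurable L := by
    refine Measurable.lintegral_prod_right ?_
    simp only [hF]; fun_prop
  have hLfin : ∀ z : ℝ, L z ≠ ⊤ := by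
    intro z
    have hq : (-1:ℝ) < (ν + 2 * ν' - 2) / 2 := by linarith
    have hint : IntegrableOn (fun x : ℝ => x ^ ((ν + 2 * ν' - 2) / 2) *
        Real.exp (-θ'⁻¹ * x ^ (1:ℝ))) (Ioi 0) :=
      integrableOn_rpow_mul_exp_neg_mul_rpow hq one_pos (inv_pos.mpr hθ')
    have hle : L z ≤ ∫⁻ x in Ioi (0:ℝ), ENNReal.ofReal
        (x ^ ((ν + 2 * ν' - 2) / 2) * Real.exp (-θ'⁻¹ * x ^ (1:ℝ))) := by
      refine setLIntegral_mono (by fun_prop) fun x hx => ?_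
      refine ENNReal.ofReal_le_ofReal ?_
      rw [Real.rpow_one]
      refine mul_le_mul_of_nonneg_left ?_ (Real.rpow_nonneg (le_of_lt hx) _)
      refine Real.exp_le_exp.mpr ?_
      have h1 : -Real.sqrt (x * z) / θ ≤ 0 :=
        div_nonpos_of_nonpos_of_nonneg (neg_nonpos.mpr (Real.sqrt_nonneg _)) hθ.le
      have h2 : -θ'⁻¹ * x = -(x / θ') := by field_simp
      rw [h2]; linarith
    exact (lt_of_le_of_lt hle hint.lintegral_lt_top).ne
  have hSpos : ∀ᵐ ω ∂μ, 0 < S ω :=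
    erg_ae_pos_of_law μ S hS dS (fun x hx => if_neg (not_lt.mpr hx)) hSlaw
  have hIpos : ∀ᵐ ω ∂μ, 0 < I ω :=
    erg_ae_pos_of_law μ I hI dI (fun x hx => if_neg (not_lt.mpr hx)) hIlaw
  set g : ℝ × ℝ → ℝ≥0∞ := fun p => ENNReal.ofReal (Real.log (1 + p.1 / p.2)) with hg
  have hmg : Measurable g :=
    ENNReal.measurable_ofReal.comp (Real.measurable_log.comp
      (measurable_const.add (measurable_fst.div measurable_snd)))
  set M : ℝ≥0∞ := ∫⁻ z in Ioi (0:ℝ),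
      ENNReal.ofReal (z ^ ((ν - 2) / 2) * Real.log (1 + z)) * L z with hM
  -- the key lintegral computation
  have key : ∫⁻ ω, ENNReal.ofReal (Real.log (1 + S ω / I ω)) ∂μ = ENNReal.ofReal c * M := by
    calc ∫⁻ ω, ENNReal.ofReal (Real.log (1 + S ω / I ω)) ∂μ
        = ∫⁻ p, g p ∂(Measure.map (fun ω => (S ω, I ω)) μ) :=
          (lintegral_map hmg (hS.prodMk hI)).symm
      _ = ∫⁻ p, g p ∂((volume.withDensity fun x => ENNReal.ofReal (dS x)).prod
            (volume.withDensity fun x => ENNReal.ofReal (dI x))) := by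
          rw [(ProbabilityTheory.indepFun_iff_map_prod_eq_prod_map_map
            hS.aemeasurable hI.aemeasurable).mp hindep, hSlaw, hIlaw]
      _ = ∫⁻ i, ∫⁻ s, g (s, i) ∂(volume.withDensity fun x => ENNReal.ofReal (dS x))
            ∂(volume.withDensity fun x => ENNReal.ofReal (dI x)) :=
          lintegral_prod_symm g hmg.aemeasurable
      _ = ∫⁻ i, ENNReal.ofReal (dI i) *
            ∫⁻ s, ENNReal.ofReal (dS s) * g (s, i) ∂volume ∂volume := by
          have hgi : ∀ i : ℝ, Measurable fun s : ℝ => g (s, i) := fun i =>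
            hmg.comp (measurable_id.prodMk measurable_const)
          have houter : Measurable fun i : ℝ =>
              ∫⁻ s, ENNReal.ofReal (dS s) * g (s, i) ∂volume := by
            refine Measurable.lintegral_prod_right (f := fun i s =>
              ENNReal.ofReal (dS s) * g (s, i)) ?_
            exact ((hmdS.comp measurable_snd).ennreal_ofReal).mul
              (hmg.comp (measurable_snd.prodMk measurable_fst))
          calc ∫⁻ i, ∫⁻ s, g (s, i) ∂(volume.withDensity fun x => ENNReal.ofReal (dS x))
                ∂(volume.withDensity fun x => ENNReal.ofReal (dI x))
              = ∫⁻ i, ∫⁻ s, ENNReal.ofReal (dS s) * g (s, i) ∂volume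
                  ∂(volume.withDensity fun x => ENNReal.ofReal (dI x)) := by
                refine lintegral_congr fun i => ?_
                exact lintegral_withDensity_eq_lintegral_mul _
                  (hmdS.ennreal_ofReal) (hgi i)
            _ = ∫⁻ i, ENNReal.ofReal (dI i) *
                  ∫⁻ s, ENNReal.ofReal (dS s) * g (s, i) ∂volume ∂volume :=
                lintegral_withDensity_eq_lintegral_mul _ (hmdI.ennreal_ofReal) houter
      _ = ∫⁻ i in Ioi (0:ℝ), ENNReal.ofReal (dI i) *
            ∫⁻ s, ENNReal.ofReal (dS s) * g (s, i) ∂volume ∂volume := by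
          refine erg_lint_Ioi _ fun i hi => ?_
          simp only [hdI, if_neg (not_lt.mpr hi), ENNReal.ofReal_zero, zero_mul]
      _ = ∫⁻ i in Ioi (0:ℝ), ∫⁻ z in Ioi (0:ℝ),
            ENNReal.ofReal (i * (dI i * (dS (i * z) * Real.log (1 + z)))) := by
          refine setLIntegral_congr_fun measurableSet_Ioi (fun i hi0 => ?_)
          have hi : (0:ℝ) < i := hi0
          have hinner : (∫⁻ s, ENNReal.ofReal (dS s) * g (s, i) ∂volume)
              = ENNReal.ofReal i * ∫⁻ z in Ioi (0:ℝ),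
                  ENNReal.ofReal (dS (i * z)) * g (i * z, i) := by
            rw [erg_lint_Ioi (fun s => ENNReal.ofReal (dS s) * g (s, i))
              (fun s hs => by
                simp only [hdS, if_neg (not_lt.mpr hs), ENNReal.ofReal_zero, zero_mul])]
            have hfm : Measurable fun s : ℝ => ENNReal.ofReal (dS s) * g (s, i) :=
              (hmdS.ennreal_ofReal).mul (hmg.comp (measurable_id.prodMk measurable_const))
            exact erg_subst_mul i hi _ hfm
          rw [hinner, ← mul_assoc, mul_comm (ENNReal.ofReal (dI i)) (ENNReal.ofReal i),
            ← lintegral_const_mul' _ _ (by finiteness)]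
          refine setLIntegral_congr_fun measurableSet_Ioi (fun z hz0 => ?_)
          have hz : (0:ℝ) < z := hz0
          have hiz : (0:ℝ) < i * z := mul_pos hi hz
          have hdiv : i * z / i = z := mul_div_cancel_left₀ z hi.ne'
          have hdInn : 0 ≤ dI i := by
            simp only [hdI, if_pos hi]
            exact mul_nonneg (div_nonneg (Real.rpow_nonneg hi.le _) (by positivity))
              (Real.exp_pos _).le
          have hdSnn : 0 ≤ dS (i * z) := by
            simp only [hdS, if_pos hiz]
            exact mul_nonneg (div_nonneg (Real.rpow_nonneg hiz.le _) (by positivity))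
              (Real.exp_pos _).le
          have hlog : 0 ≤ Real.log (1 + z) :=
            Real.log_nonneg (by linarith [le_of_lt hz])
          simp only [hg, hdiv]
          rw [ENNReal.ofReal_mul hi.le, ENNReal.ofReal_mul hdInn, ENNReal.ofReal_mul hdSnn]
          ring
      _ = ∫⁻ z in Ioi (0:ℝ), ∫⁻ i in Ioi (0:ℝ),
            ENNReal.ofReal (i * (dI i * (dS (i * z) * Real.log (1 + z)))) := by
          refine lintegral_lintegral_swap ?_
          refine Measurable.aemeasurable ?_
          refine ENNReal.measurable_ofReal.comp ?_
          refine Measurable.mul measurable_fst ?_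
          refine Measurable.mul (hmdI.comp measurable_fst) ?_
          exact (hmdS.comp (measurable_fst.mul measurable_snd)).mul
            ((Real.measurable_log.comp (measurable_const.add measurable_snd)))
      _ = ∫⁻ z in Ioi (0:ℝ), ENNReal.ofReal c *
            (ENNReal.ofReal (z ^ ((ν - 2) / 2) * Real.log (1 + z)) * L z) := by
          refine setLIntegral_congr_fun measurableSet_Ioi (fun z hz0 => ?_)
          have hz : (0:ℝ) < z := hz0
          have hlog : 0 ≤ Real.log (1 + z) :=
            Real.log_nonneg (by linarith [le_of_lt hz])
          have hznn : 0 ≤ z ^ ((ν - 2) / 2) * Real.log (1 + z) :=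
            mul_nonneg (Real.rpow_nonneg (le_of_lt hz) _) hlog
          rw [hL, ← mul_assoc, ← ENNReal.ofReal_mul hcpos.le,
            ← lintegral_const_mul' _ _ (by finiteness)]
          refine setLIntegral_congr_fun measurableSet_Ioi (fun i hi0 => ?_)
          have hi : (0:ℝ) < i := hi0
          have hiz : (0:ℝ) < i * z := mul_pos hi hz
          simp only [hdI, hdS, hF, if_pos hi, if_pos hiz]
          rw [← ENNReal.ofReal_mul (mul_nonneg hcpos.le hznn)]
          refine congrArg ENNReal.ofReal ?_
          rw [hc]
          linear_combination erg_key_ident ν θ ν' θ' hν hθ hν' hθ' i z hi hz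
      _ = ENNReal.ofReal c * M := by
          rw [hM, lintegral_const_mul' _ _ (by finiteness)]
  -- convert LHS
  have hmlog : Measurable fun ω => Real.log (1 + S ω / I ω) :=
    Real.measurable_log.comp (measurable_const.add (hS.div hI))
  have hLHS : ∫ ω, Real.log (1 + S ω / I ω) ∂μ
      = (∫⁻ ω, ENNReal.ofReal (Real.log (1 + S ω / I ω)) ∂μ).toReal := by
    refine integral_eq_lintegral_of_nonneg_ae ?_ hmlog.aestronglyMeasurable
    filter_upwards [hSpos, hIpos] with ω h1 h2
    exact Real.log_nonneg (by nlinarith [div_nonneg h1.le h2.le])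
  -- convert RHS inner integral
  have hJ : ∀ z : ℝ, ∫ x in Ioi (0:ℝ), F z x = (L z).toReal := by
    intro z
    rw [hL]
    refine integral_eq_lintegral_of_nonneg_ae ?_ ?_
    · refine (ae_restrict_iff' measurableSet_Ioi).mpr (ae_of_all _ fun x hx => ?_)
      simp only [hF]
      exact mul_nonneg (Real.rpow_nonneg (le_of_lt hx) _) (Real.exp_pos _).le
    · refine Measurable.aestronglyMeasurable ?_
      simp only [hF]; fun_prop
  -- convert RHS outer integral
  have hRHS : ∫ z in Ioi (0:ℝ), z ^ ((ν - 2) / 2) * Real.log (1 + z) *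
      ∫ x in Ioi (0:ℝ), F z x = M.toReal := by
    simp only [hJ]
    rw [hM]
    have hmint : Measurable fun z : ℝ =>
        z ^ ((ν - 2) / 2) * Real.log (1 + z) * (L z).toReal := by
      refine Measurable.mul ?_ (ENNReal.measurable_toReal.comp hmL)
      exact Measurable.mul (by fun_prop : Measurable fun z : ℝ => z ^ ((ν - 2) / 2))
        (Real.measurable_log.comp (measurable_const.add measurable_id))
    rw [integral_eq_lintegral_of_nonneg_ae ?_ hmint.aestronglyMeasurable]
    · congr 1
      refine setLIntegral_congr_fun measurableSet_Ioi (fun z hz => ?_)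
      have hlog : 0 ≤ Real.log (1 + z) :=
        Real.log_nonneg (by linarith [mem_Ioi.mp hz])
      have hznn : 0 ≤ z ^ ((ν - 2) / 2) * Real.log (1 + z) :=
        mul_nonneg (Real.rpow_nonneg (le_of_lt hz) _) hlog
      rw [ENNReal.ofReal_mul hznn, ENNReal.ofReal_toReal (hLfin z)]
    · refine (ae_restrict_iff' measurableSet_Ioi).mpr (ae_of_all _ fun z hz => ?_)
      have hlog : 0 ≤ Real.log (1 + z) :=
        Real.log_nonneg (by linarith [mem_Ioi.mp hz])
      exact mul_nonneg (mul_nonneg (Real.rpow_nonneg (le_of_lt hz) _) hlog)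
        ENNReal.toReal_nonneg
  rw [hLHS, key, ENNReal.toReal_mul, ENNReal.toReal_ofReal hcpos.le]
  rw [show (∫ z in Set.Ioi (0 : ℝ), z ^ ((ν - 2) / 2) * Real.log (1 + z) *
      ∫ x in Set.Ioi (0 : ℝ),
        x ^ ((ν + 2 * ν' - 2) / 2) * Real.exp (-Real.sqrt (x * z) / θ - x / θ'))
      = ∫ z in Ioi (0:ℝ), z ^ ((ν - 2) / 2) * Real.log (1 + z) *
          ∫ x in Ioi (0:ℝ), F z x from rfl, hRHS]
end
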